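/- arXiv:2108.02295 — 4 statements merged into one kernel-verified Lean document; each statement's English description precedes it below -/
import Mathlib

section
/- Let M ⊆ ℕ be a finite nonempty set such that the underlying undirected graph of (M, E(M)) is connected, and let p be a prime number. If (M, E(M)) satisfies property (S_p), then it satisfies property (T_p). (Lemma 2.7 (a)) -/
open Polynomial TensorProduct

namespace WeightPaper

/-! ### Directed graphs on finite sets of natural numbers -/

/-- A `p`-edge from `m₁` to `m₂`: `p` is prime, `m₂ ∣ m₁` and `m₁/m₂` is a
positive power of `p`. -/
def PEdge (p m₁ m₂ : ℕ) : Prop :=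
  p.Prime ∧ m₂ ∣ m₁ ∧ ∃ e : ℕ, 1 ≤ e ∧ m₁ = m₂ * p ^ e

/-- An edge of the graph `(M, E(M))` (forgetting the prime). -/
def GEdge (m₁ m₂ : ℕ) : Prop := ∃ p : ℕ, PEdge p m₁ m₂

/-- The undirected graph on the vertex set `M` underlying a directed edge
relation `E`. -/
def graphOn (M : Finset ℕ) (E : ℕ → ℕ → Prop) : SimpleGraph {x : ℕ // x ∈ M} where
  Adj a b := a ≠ b ∧ (E a.1 b.1 ∨ E b.1 a.1)
  symm := ⟨fun a b h => ⟨Ne.symm h.1, Or.symm h.2⟩⟩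
  loopless := ⟨fun a h => h.1 rfl⟩

/-- The underlying undirected graph of `(M, E(M))`. -/
def fullGraph (M : Finset ℕ) : SimpleGraph {x : ℕ // x ∈ M} := graphOn M GEdge

/-- The underlying undirected graph of `(M, E(M))` with all `p`-edges removed.
Its connected components are the `p`-planes. -/
def planeGraph (M : Finset ℕ) (p : ℕ) : SimpleGraph {x : ℕ // x ∈ M} :=
  graphOn M (fun a b => GEdge a b ∧ ¬ PEdge p a b)

/-- A highest `p`-plane: a `p`-plane at no vertex of which a `p`-edge ends. -/
def IsHighestPPlane (M : Finset ℕ) (p : ℕ) (c : (planeGraph M p).ConnectedComponent) : Prop :=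
  ∀ (m₁ : ℕ), m₁ ∈ M → ∀ (m₂ : ℕ) (h₂ : m₂ ∈ M),
    PEdge p m₁ m₂ → (planeGraph M p).connectedComponentMk ⟨m₂, h₂⟩ ≠ c

/-- Property `(T_p)`: there is exactly one highest `p`-plane. -/
def PropT (M : Finset ℕ) (p : ℕ) : Prop := ∃! c, IsHighestPPlane M p c

/-- A highest `p`-edge (in `M`): a `p`-edge from `m₁` to `m₂` such that no
`p`-edge of the graph ends at `m₁`. -/
def IsHighestPEdge (M : Finset ℕ) (p m₁ m₂ : ℕ) : Prop :=
  PEdge p m₁ m₂ ∧ ∀ m₀ ∈ M, ¬ PEdge p m₀ m₁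

/-- The underlying undirected graph of `(M, E(M))` with all highest `p`-edges
removed. -/
def spGraph (M : Finset ℕ) (p : ℕ) : SimpleGraph {x : ℕ // x ∈ M} :=
  graphOn M (fun a b => GEdge a b ∧ ¬ IsHighestPEdge M p a b)

/-- Property `(S_p)`: the graph `(M, E(M) - {highest p-edges})` has at most two
connected components. -/
def PropS (M : Finset ℕ) (p : ℕ) : Prop :=
  ∀ c₁ c₂ c₃ : (spGraph M p).ConnectedComponent, c₁ = c₂ ∨ c₁ = c₃ ∨ c₂ = c₃

/-- Condition (I). -/
def ConditionI (M : Finset ℕ) : Prop :=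
  (fullGraph M).Connected ∧ PropS M 2 ∧ ∀ p : ℕ, p.Prime → 3 ≤ p → PropT M p

/-- The vertex set of a connected component of `(M, E(M))`, as a `Finset ℕ`. -/
noncomputable def compSet (M : Finset ℕ) (c : (fullGraph M).ConnectedComponent) : Finset ℕ :=
  @Finset.filter ℕ (fun m => ∃ h : m ∈ M, (fullGraph M).connectedComponentMk ⟨m, h⟩ = c)
    (Classical.decPred _) M

/-- Condition (II). -/
def ConditionII (M : Finset ℕ) : Prop :=
  ∃ c₁ c₂ : (fullGraph M).ConnectedComponent, c₁ ≠ c₂ ∧ (∀ c, c = c₁ ∨ c = c₂) ∧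
    (∀ m₁ ∈ compSet M c₁, ∀ m₂ ∈ compSet M c₁, ¬ PEdge 2 m₁ m₂) ∧
    (∀ m₁ ∈ compSet M c₂, ∀ m₂ ∈ compSet M c₂, ¬ PEdge 2 m₁ m₂) ∧
    (∀ p : ℕ, p.Prime → 3 ≤ p → PropT (compSet M c₁) p ∧ PropT (compSet M c₂) p) ∧
    (Nat.gcd ((compSet M c₁).lcm id) ((compSet M c₂).lcm id) = 1 ∨
      Nat.gcd ((compSet M c₁).lcm id) ((compSet M c₂).lcm id) = 2) ∧
    ((compSet M c₁).lcm id).factorization 2 < ((compSet M c₂).lcm id).factorization 2 ∧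
    (((compSet M c₁).lcm id).factorization 2 = 0 ∨ ((compSet M c₁).lcm id).factorization 2 = 1)

/-! ### Excellent orders -/

/-- An excellent order on `{0, 1, …, s}`, given by its data `s` and
`S(≻) ⊆ {1, …, s}`. -/
structure ExcellentOrder where
  s : ℕ
  S : Finset ℕ
  hS : S ⊆ Finset.Icc 1 s

/-- The strict order `a ≻ b` determined by an excellent order: the elements of
`S(≻)` come first, in decreasing natural order, then `0`, then the remaining
elements of `{0, …, s}`, in increasing natural order. -/
def ExcellentOrder.gt (E : ExcellentOrder) (a b : ℕ) : Prop :=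
  (a ∈ E.S ∧ b ∈ E.S ∧ b < a) ∨ (a ∈ E.S ∧ b ∉ E.S) ∨ (a ∉ E.S ∧ b ∉ E.S ∧ a < b)

/-- The maximal element `s⁺(≻)` of `{0, …, s}` with respect to `≻`. -/
noncomputable def ExcellentOrder.sPlus (E : ExcellentOrder) : ℕ :=
  if h : E.S.Nonempty then E.S.max' h else 0

/-- The tensor product of two excellent orders. -/
def ExcellentOrder.tensor (E₁ E₂ : ExcellentOrder) : ExcellentOrder where
  s := max E₁.s E₂.s
  S := (E₁.S ∪ E₂.S) \ (E₁.S ∩ E₂.S)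
  hS := by
    intro x hx
    simp only [Finset.mem_sdiff, Finset.mem_union] at hx
    rcases hx.1 with h | h
    · have h' := E₁.hS h
      simp only [Finset.mem_Icc] at h' ⊢
      omega
    · have h' := E₂.hS h
      simp only [Finset.mem_Icc] at h' ⊢
      omega

/-- A set `K ⊆ ℕ₀` is subset compatible with an excellent order `≻` on
`{0, …, s}` if `K = {0, …, s}` or `K = {k ∈ {0, …, s} | k ≻ k₀}` for some
`k₀ ∈ {0, …, s}`. -/
def SubsetCompatible (E : ExcellentOrder) (K : Set ℕ) : Prop :=
  K = {k : ℕ | k ≤ E.s} ∨ ∃ k₀ ≤ E.s, K = {k : ℕ | k ≤ E.s ∧ E.gt k k₀}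

/-- `π_p(m) = m · p^{-v_p(m)}`. -/
def piP (p m : ℕ) : ℕ := m / p ^ (m.factorization p)

/-- The quadrant `V((≻_p)_{p ∈ P})`. -/
def Vset (P : Finset ℕ) (exc : ℕ → ExcellentOrder) : Set ℕ :=
  { m : ℕ | ∃ k : ℕ → ℕ, (∀ p ∈ P, k p ≤ (exc p).s) ∧ m = ∏ p ∈ P, p ^ k p }

/-- The edge relation `E_V` of the graph `(V, E_V)`. -/
def EV (P : Finset ℕ) (exc : ℕ → ExcellentOrder) (ma mb : ℕ) : Prop :=
  ma ∈ Vset P exc ∧ mb ∈ Vset P exc ∧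
    ∃ p ∈ P, piP p ma = piP p mb ∧ (exc p).gt (ma.factorization p) (mb.factorization p)

/-- The center `v_V = ∏_{p ∈ P} p^{s⁺(≻_p)}`. -/
noncomputable def vV (P : Finset ℕ) (exc : ℕ → ExcellentOrder) : ℕ :=
  ∏ p ∈ P, p ^ (exc p).sPlus

/-- Compatibility of a finite nonempty set `M ⊆ ℕ` with a tuple of excellent
orders. -/
def FinsetCompatible (P : Finset ℕ) (exc : ℕ → ExcellentOrder) (M : Finset ℕ) : Prop :=
  (↑M : Set ℕ) ⊆ Vset P exc ∧
    ∀ p : ℕ, p.Prime → (∃ m ∈ M, p ∣ m) →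
      ∀ m₀ : ℕ, (∃ m ∈ M, m₀ = piP p m) →
        SubsetCompatible (exc p) {k : ℕ | m₀ * p ^ k ∈ M}

/-- Compatibility of a map `ψ : ℕ → ℕ₀` (with finite support) with a tuple of
excellent orders. -/
def PsiCompatible (P : Finset ℕ) (exc : ℕ → ExcellentOrder) (ψ : ℕ → ℕ) : Prop :=
  Function.support ψ ⊆ Vset P exc ∧ ∀ ma mb : ℕ, EV P exc ma mb → ψ mb ≤ ψ ma

/-- A covering `(M₁, …, M_l)` of `ψ`. -/
def IsCovering (ψ : ℕ → ℕ) {l : ℕ} (Ms : Fin l → Finset ℕ) : Prop :=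
  (∀ j, (Ms j).Nonempty) ∧
    ∀ m : ℕ, ψ m = (Finset.univ.filter (fun j => m ∈ Ms j)).card

/-- `l_ψ := max(ψ(m) | m ∈ ℕ)`. -/
noncomputable def lpsi (ψ : ℕ → ℕ) (h : (Function.support ψ).Finite) : ℕ :=
  h.toFinset.sup ψ

/-- The `j`-th set `M_j^{(st)} = {m | ψ(m) ≥ j}` of the standard covering. -/
noncomputable def stdCov (ψ : ℕ → ℕ) (h : (Function.support ψ).Finite) (j : ℕ) : Finset ℕ :=
  h.toFinset.filter (fun m => j ≤ ψ m)

/-! ### Paths and centers of directed graphs -/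

/-- A vertex `w` is a center of the directed graph `(W, E)`: the graph has no
path from any vertex to itself, and there is a path from `w` to every other
vertex. A path is a tuple `(w₁, …, w_l)`, `l ≥ 2`, of vertices with
`(w_j, w_{j+1}) ∈ E`. -/
def HasCenter (W : Set ℕ) (E : ℕ → ℕ → Prop) (w : ℕ) : Prop :=
  w ∈ W ∧
    (¬ ∃ (l : List ℕ) (x : ℕ), 2 ≤ l.length ∧ l.Chain' E ∧ (∀ y ∈ l, y ∈ W) ∧
        l.head? = some x ∧ l.getLast? = some x) ∧
    (∀ x ∈ W, x ≠ w → ∃ l : List ℕ, 2 ≤ l.length ∧ l.Chain' E ∧ (∀ y ∈ l, y ∈ W) ∧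
        l.head? = some w ∧ l.getLast? = some x)

/-! ### Orlik blocks -/

/-- The underlying `ℤ`-module of the Orlik block of `M`:
`ℤ[X]/(∏_{m ∈ M} Φ_m)`. -/
@[reducible] noncomputable def OrlikModule (M : Finset ℕ) : Type :=
  Polynomial ℤ ⧸ Ideal.span {∏ m ∈ M, Polynomial.cyclotomic m ℤ}

/-- The automorphism `h_M` of the Orlik block: multiplication by the class
of `X`. -/
noncomputable def hMap (M : Finset ℕ) : Module.End ℤ (OrlikModule M) :=
  LinearMap.mulLeft ℤ
    (Ideal.Quotient.mk (Ideal.span {∏ m ∈ M, Polynomial.cyclotomic m ℤ}) Polynomial.X)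

/-- The direct sum `⊕_i h_{M_i}` on `⊕_i H_{M_i}` (realized as a Pi type). -/
noncomputable def piHM {l : ℕ} (Ms : Fin l → Finset ℕ) :
    Module.End ℤ ((i : Fin l) → OrlikModule (Ms i)) :=
  LinearMap.pi (fun i => (hMap (Ms i)).comp (LinearMap.proj i))

/-- `Aut_{S¹}(H_M, h_M) = {± h_M^k | k ∈ ℤ}`: every `ℤ`-module automorphism of
`H_M` commuting with `h_M` all of whose complex eigenvalues lie on the unit
circle is `± h_M^k` for some `k ∈ ℤ` (written here as
`φ ∘ h_M^l = ± h_M^k` with `k, l ∈ ℕ`). -/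
def AutIsSmall (M : Finset ℕ) : Prop :=
  ∀ φ : OrlikModule M ≃ₗ[ℤ] OrlikModule M,
    (φ.toLinearMap * hMap M = hMap M * φ.toLinearMap) →
    (∀ μ : ℂ, Module.End.HasEigenvalue (LinearMap.baseChange ℂ φ.toLinearMap) μ →
      ‖μ‖ = 1) →
    ∃ k l : ℕ, φ.toLinearMap * (hMap M) ^ l = (hMap M) ^ k ∨
      φ.toLinearMap * (hMap M) ^ l = - ((hMap M) ^ k)

/-! ### Tensor products of polynomials and of finitely supported maps -/

/-- The tensor product `f ⊗ g = ∏_{i,j} (t - κ_i λ_j)` of two unitary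
polynomials with roots `κ_i` resp. `λ_j`. -/
noncomputable def polyTensor (f g : Polynomial ℂ) : Polynomial ℂ :=
  ((f.roots.bind (fun κ => g.roots.map (fun μ => κ * μ))).map
    (fun r => Polynomial.X - Polynomial.C r)).prod

/-- `∏_{m} Φ_m^{ψ(m)}` over `ℂ`. -/
noncomputable def cycProd (ψ : ℕ → ℕ) (h : (Function.support ψ).Finite) : Polynomial ℂ :=
  ∏ m ∈ h.toFinset, (Polynomial.cyclotomic m ℂ) ^ (ψ m)

/-! ### Weight systems -/

/-- Condition (C2). -/
def CondC2 {n : ℕ} (v : Fin n → ℕ) (d : ℕ) : Prop :=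
  ∀ J : Finset (Fin n), J.Nonempty → ∃ K : Finset (Fin n), K.card = J.card ∧
    ∀ k ∈ K, ∃ α : Fin n → ℕ, ∑ i ∈ J, α i * v i = d - v k

/-- Condition (C2bar). -/
def CondC2bar {n : ℕ} (v : Fin n → ℕ) (d : ℕ) : Prop :=
  ∀ J : Finset (Fin n), J.Nonempty → ∃ K : Finset (Fin n), K.card = J.card ∧
    ∀ k ∈ K, ∃ α : Fin n → ℤ, ∑ i ∈ J, α i * (v i : ℤ) = (d : ℤ) - (v k : ℤ)

/-- The characteristic polynomial `Δ` of the monodromy, built from the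
generating polynomial `Q = ρ_{(v;d)} ∈ ℤ[t]`:
`Δ = ∏_k (t - e^{2πik/d})^{coeff_k Q}`. -/
noncomputable def Delta (d : ℕ) (Q : Polynomial ℤ) : Polynomial ℂ :=
  ∏ k ∈ Finset.range (Q.natDegree + 1),
    (Polynomial.X - Polynomial.C (Complex.exp (2 * Real.pi * Complex.I * k / d))) ^
      (Q.coeff k).toNat

/-- `ψ_w(m)`: the multiplicity of `e^{2πi/m}` as a root of `Δ` (and `0` for
`m = 0`). -/
noncomputable def psiW (d : ℕ) (Q : Polynomial ℤ) (m : ℕ) : ℕ :=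
  if m = 0 then 0
  else (Delta d Q).rootMultiplicity (Complex.exp (2 * Real.pi * Complex.I / m))

/-- The excellent order `≻_p^w` of Theorem 6.6, for the set `Mw = supp ψ_w`
and the reduced denominators `t_j` of the weights. -/
noncomputable def excW {n : ℕ} (t : Fin n → ℕ) (Mw : Finset ℕ) (p : ℕ) : ExcellentOrder where
  s := Mw.sup (fun m => m.factorization p)
  S := (Finset.Icc 1 (Mw.sup (fun m => m.factorization p))).filter
    (fun k => Odd ((Finset.univ.filter (fun j : Fin n => p ^ k ∣ t j)).card))
  hS := Finset.filter_subset _ _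

/-- The weighted-degree-`k` part `W_k` of `ℂ[x_1, …, x_n]`: the subspace of
polynomials all of whose monomials `x^α` satisfy `∑ v_i α_i = k`. -/
noncomputable def weightedHomog (n : ℕ) (v : Fin n → ℕ) (k : ℕ) : Submodule ℂ (MvPolynomial (Fin n) ℂ) where
  carrier := { f | ∀ α ∈ f.support, ∑ i, v i * α i = k }
  add_mem' := by
    intro a b ha hb α hα
    rcases Finset.mem_union.mp (MvPolynomial.support_add hα) with h | h
    · exact ha α h
    · exact hb α h
  zero_mem' := by
    intro α hα
    simp at hα
  smul_mem' := by
    intro c f hf α hα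
    exact hf α (MvPolynomial.support_smul hα)

private lemma walk_closed {V : Type*} {G : SimpleGraph V} {S : V → Prop}
    (hS : ∀ a b : V, G.Adj a b → S a → S b) :
    ∀ {a b : V}, G.Walk a b → S a → S b
  | _, _, SimpleGraph.Walk.nil, ha => ha
  | _, _, SimpleGraph.Walk.cons h w, ha => walk_closed hS w (hS _ _ h ha)

private lemma reach_closed {V : Type*} {G : SimpleGraph V} {S : V → Prop}
    (hS : ∀ a b : V, G.Adj a b → S a → S b) {a b : V}
    (h : G.Reachable a b) (ha : S a) : S b := by
  obtain ⟨w⟩ := h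
  exact walk_closed hS w ha

private lemma vp_eq_of_gedge {p m₁ m₂ : ℕ} (hm₂ : m₂ ≠ 0)
    (hg : GEdge m₁ m₂) (hnp : ¬ PEdge p m₁ m₂) :
    m₁.factorization p = m₂.factorization p := by
  obtain ⟨q, hq, hdvd, e, he, heq⟩ := hg
  have hqp : q ≠ p := by
    rintro rfl
    exact hnp ⟨hq, hdvd, e, he, heq⟩
  subst heq
  rw [Nat.factorization_mul hm₂ (pow_ne_zero _ hq.pos.ne'), Finsupp.add_apply,
    hq.factorization_pow, Finsupp.single_apply, if_neg hqp, add_zero]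

private lemma vp_pedge {p m₁ m₂ : ℕ} (hm₂ : m₂ ≠ 0) (hpe : PEdge p m₁ m₂) :
    ∃ e, 1 ≤ e ∧ m₁.factorization p = m₂.factorization p + e := by
  obtain ⟨hp, hdvd, e, he, heq⟩ := hpe
  refine ⟨e, he, ?_⟩
  subst heq
  rw [Nat.factorization_mul hm₂ (pow_ne_zero _ hp.pos.ne'), Finsupp.add_apply,
    hp.factorization_pow, Finsupp.single_apply, if_pos rfl]

/-- `p`-adic valuation is constant on `p`-planes. -/
private lemma vp_eq_of_plane_reachable {M : Finset ℕ} (h0 : 0 ∉ M) {p : ℕ}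
    {a b : {x : ℕ // x ∈ M}} (h : (planeGraph M p).Reachable a b) :
    (a.1).factorization p = (b.1).factorization p := by
  refine reach_closed (S := fun x => (a.1).factorization p = (x.1).factorization p)
    ?_ h rfl
  intro x y hxy hx
  have hy0 : (y.1) ≠ 0 := fun h => h0 (h ▸ y.2)
  have hx0 : (x.1) ≠ 0 := fun h => h0 (h ▸ x.2)
  rcases hxy.2 with ⟨hg, hnp⟩ | ⟨hg, hnp⟩
  · rw [hx, vp_eq_of_gedge hy0 hg hnp]
  · rw [hx, ← vp_eq_of_gedge hx0 hg hnp]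

/-- If `c` is a highest `p`-plane, the set of vertices in plane `c` is closed
under adjacency in the graph with highest `p`-edges removed. -/
private lemma sp_closed {M : Finset ℕ} {p : ℕ}
    {c : (planeGraph M p).ConnectedComponent} (hc : IsHighestPPlane M p c)
    (a b : {x : ℕ // x ∈ M}) (hab : (spGraph M p).Adj a b)
    (ha : (planeGraph M p).connectedComponentMk a = c) :
    (planeGraph M p).connectedComponentMk b = c := by
  rcases hab.2 with ⟨hg, hnh⟩ | ⟨hg, hnh⟩
  · by_cases hpe : PEdge p a.1 b.1
    · exfalso
      have : ¬ ∀ m₀ ∈ M, ¬ PEdge p m₀ a.1 := fun h => hnh ⟨hpe, h⟩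
      push_neg at this
      obtain ⟨m₀, hm₀, hpe₀⟩ := this
      exact hc m₀ hm₀ a.1 a.2 hpe₀ ha
    · have hadj : (planeGraph M p).Adj a b := ⟨hab.1, Or.inl ⟨hg, hpe⟩⟩
      rw [← ha]
      exact (SimpleGraph.ConnectedComponent.sound hadj.reachable).symm
  · by_cases hpe : PEdge p b.1 a.1
    · exact absurd ha (hc b.1 b.2 a.1 a.2 hpe)
    · have hadj : (planeGraph M p).Adj b a := ⟨hab.1.symm, Or.inl ⟨hg, hpe⟩⟩
      rw [← ha]
      exact SimpleGraph.ConnectedComponent.sound hadj.reachable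

private lemma sp_reach_closed {M : Finset ℕ} {p : ℕ}
    {c : (planeGraph M p).ConnectedComponent} (hc : IsHighestPPlane M p c)
    {a b : {x : ℕ // x ∈ M}} (hab : (spGraph M p).Reachable a b)
    (ha : (planeGraph M p).connectedComponentMk a = c) :
    (planeGraph M p).connectedComponentMk b = c :=
  reach_closed (sp_closed hc) hab ha

/-- Lemma 2.7 (a). -/
theorem statement0 (M : Finset ℕ) (hM : M.Nonempty) (h0 : 0 ∉ M) (p : ℕ) (hp : p.Prime)
    (hconn : (fullGraph M).Connected) (hSp : PropS M p) : PropT M p := by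
  classical
  -- existence: the plane of an element with maximal `p`-adic valuation is highest
  obtain ⟨m, hm, hmax⟩ := M.exists_max_image (fun m => m.factorization p) hM
  set cstar := (planeGraph M p).connectedComponentMk ⟨m, hm⟩ with hcstar
  have hhigh : IsHighestPPlane M p cstar := by
    intro m₁ h₁ m₂ h₂ hpe hcomp
    have hm₂0 : m₂ ≠ 0 := fun h => h0 (h ▸ h₂)
    obtain ⟨e, he, hval⟩ := vp_pedge hm₂0 hpe
    have hreach : (planeGraph M p).Reachable ⟨m₂, h₂⟩ ⟨m, hm⟩ :=
      SimpleGraph.ConnectedComponent.exact hcomp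
    have hveq := vp_eq_of_plane_reachable h0 hreach
    have := hmax m₁ h₁
    simp only at hveq this
    omega
  refine ⟨cstar, hhigh, ?_⟩
  -- uniqueness
  intro c hc
  by_contra hne
  obtain ⟨x, hx⟩ := c.exists_rep
  have hxstar : (planeGraph M p).connectedComponentMk ⟨m, hm⟩ = cstar := rfl
  -- every vertex lies in plane `c` or in plane `cstar`
  have hall : ∀ y : {z : ℕ // z ∈ M},
      (planeGraph M p).connectedComponentMk y = c ∨
      (planeGraph M p).connectedComponentMk y = cstar := by
    intro y
    rcases hSp ((spGraph M p).connectedComponentMk y)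
        ((spGraph M p).connectedComponentMk x)
        ((spGraph M p).connectedComponentMk ⟨m, hm⟩) with h | h | h
    · exact Or.inl (sp_reach_closed hc (SimpleGraph.ConnectedComponent.exact h).symm hx)
    · exact Or.inr (sp_reach_closed hhigh
        (SimpleGraph.ConnectedComponent.exact h).symm hxstar)
    · exfalso
      have := sp_reach_closed hc (SimpleGraph.ConnectedComponent.exact h) hx
      exact hne (this.symm.trans hxstar)
  -- hence there is no `p`-edge at all
  have hnopedge : ∀ m₁ ∈ M, ∀ m₂ ∈ M, ¬ PEdge p m₁ m₂ := by
    intro m₁ h₁ m₂ h₂ hpe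
    rcases hall ⟨m₂, h₂⟩ with h | h
    · exact hc m₁ h₁ m₂ h₂ hpe h
    · exact hhigh m₁ h₁ m₂ h₂ hpe h
  -- so the full graph is a subgraph of the `spGraph`, and the latter is connected
  have hle : fullGraph M ≤ spGraph M p := by
    intro a b hab
    refine ⟨hab.1, ?_⟩
    rcases hab.2 with hg | hg
    · exact Or.inl ⟨hg, fun hh => hnopedge a.1 a.2 b.1 b.2 hh.1⟩
    · exact Or.inr ⟨hg, fun hh => hnopedge b.1 b.2 a.1 a.2 hh.1⟩
  have hreach : (spGraph M p).Reachable x ⟨m, hm⟩ :=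
    (hconn.preconnected x ⟨m, hm⟩).mono hle
  have := sp_reach_closed hc hreach hx
  exact hne (this.symm.trans hxstar)

end WeightPaper
end

section
/- Let M ⊆ ℕ be a finite nonempty set which is compatible with a tuple (≻_p)_{p∈P} of excellent orders, where P ⊇ 𝒫(M) is a finite set of primes. Then: the underlying undirected graph of (M, E(M)) is connected; (M, E(M)) satisfies property (S_p) for every prime p; and M satisfies condition (I). (Lemma 2.7 (b)) -/
open Polynomial TensorProduct

namespace WeightPaper

/-! ### Auxiliary lemmas for Statement 1 -/

private lemma gtTrans (E : ExcellentOrder) {a b c : ℕ} (h1 : E.gt a b) (h2 : E.gt b c) :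
    E.gt a c := by
  rcases h1 with ⟨ha, hb, h⟩ | ⟨ha, hb⟩ | ⟨ha, hb, h⟩ <;>
  rcases h2 with ⟨hb', hc, h'⟩ | ⟨hb', hc⟩ | ⟨hb', hc, h'⟩ <;>
  first
    | exact absurd hb' hb
    | exact absurd hb hb'
    | exact Or.inl ⟨ha, hc, by omega⟩
    | exact Or.inr (Or.inl ⟨ha, hc⟩)
    | exact Or.inr (Or.inr ⟨ha, hc, by omega⟩)

private lemma gtTotal (E : ExcellentOrder) {a b : ℕ} (h : a ≠ b) : E.gt a b ∨ E.gt b a := by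
  by_cases ha : a ∈ E.S <;> by_cases hb : b ∈ E.S
  · rcases Nat.lt_or_ge a b with h' | h'
    · exact Or.inr (Or.inl ⟨hb, ha, h'⟩)
    · exact Or.inl (Or.inl ⟨ha, hb, by omega⟩)
  · exact Or.inl (Or.inr (Or.inl ⟨ha, hb⟩))
  · exact Or.inr (Or.inr (Or.inl ⟨hb, ha⟩))
  · rcases Nat.lt_or_ge a b with h' | h'
    · exact Or.inl (Or.inr (Or.inr ⟨ha, hb, h'⟩))
    · exact Or.inr (Or.inr (Or.inr ⟨hb, ha, by omega⟩))

private lemma compat_nested {E : ExcellentOrder} {K₁ K₂ : Set ℕ}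
    (h₁ : SubsetCompatible E K₁) (h₂ : SubsetCompatible E K₂) : K₁ ⊆ K₂ ∨ K₂ ⊆ K₁ := by
  rcases h₁ with rfl | ⟨k₁, hk₁, rfl⟩
  · rcases h₂ with rfl | ⟨k₂, hk₂, rfl⟩
    · exact Or.inl fun x hx => hx
    · exact Or.inr fun x hx => hx.1
  · rcases h₂ with rfl | ⟨k₂, hk₂, rfl⟩
    · exact Or.inl fun x hx => hx.1
    · rcases eq_or_ne k₁ k₂ with rfl | hne
      · exact Or.inl fun x hx => hx
      · rcases gtTotal E hne with h | h
        · exact Or.inl fun x hx => ⟨hx.1, gtTrans E hx.2 h⟩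
        · exact Or.inr fun x hx => ⟨hx.1, gtTrans E hx.2 h⟩

private lemma piP_mul_pow_self {q m : ℕ} : piP q m * q ^ m.factorization q = m := by
  rw [piP, mul_comm]
  exact Nat.ordProj_mul_ordCompl_eq_self m q

private lemma fact_piP_mul_pow {q m : ℕ} (hq : q.Prime) (hm : m ≠ 0) (k r : ℕ) :
    (piP q m * q ^ k).factorization r = if r = q then k else m.factorization r := by
  have h1 : m / q ^ m.factorization q ≠ 0 := (Nat.ordCompl_pos q hm).ne'
  rw [piP, Nat.factorization_mul h1 (pow_ne_zero k hq.pos.ne'), hq.factorization_pow,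
    Finsupp.add_apply, Nat.factorization_ordCompl, Finsupp.erase_apply, Finsupp.single_apply]
  by_cases h : r = q
  · simp [h]
  · simp [h, Ne.symm h]

private lemma pedge_col {q : ℕ} (m₀ : ℕ) (hq : q.Prime) {a b : ℕ} (h : b < a) :
    PEdge q (m₀ * q ^ a) (m₀ * q ^ b) :=
  ⟨hq, mul_dvd_mul_left m₀ (pow_dvd_pow q h.le), a - b, by omega,
    by rw [mul_assoc, ← pow_add, Nat.add_sub_cancel' h.le]⟩

private lemma pedge_factorization {p x y : ℕ} (h : PEdge p x y) (hy : y ≠ 0) :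
    ∃ e : ℕ, 1 ≤ e ∧ ∀ r : ℕ, x.factorization r = y.factorization r + (if r = p then e else 0) := by
  obtain ⟨hp, -, e, he, rfl⟩ := h
  refine ⟨e, he, fun r => ?_⟩
  rw [Nat.factorization_mul hy (pow_ne_zero e hp.pos.ne'), hp.factorization_pow,
    Finsupp.add_apply, Finsupp.single_apply]
  by_cases hr : r = p
  · simp [hr]
  · simp [hr, Ne.symm hr]

private lemma col_mem {M : Finset ℕ} {P : Finset ℕ} {exc : ℕ → ExcellentOrder}
    (hcomp : FinsetCompatible P exc M) {q : ℕ} (hq : q.Prime) (hdvd : ∃ x ∈ M, q ∣ x)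
    {m m' : ℕ} (hm : m ∈ M) (hm' : m' ∈ M) :
    piP q m * q ^ m'.factorization q ∈ M ∨ piP q m' * q ^ m.factorization q ∈ M := by
  have s1 := hcomp.2 q hq hdvd (piP q m) ⟨m, hm, rfl⟩
  have s2 := hcomp.2 q hq hdvd (piP q m') ⟨m', hm', rfl⟩
  have e1 : m.factorization q ∈ {k : ℕ | piP q m * q ^ k ∈ M} := by
    show piP q m * q ^ m.factorization q ∈ M
    rw [piP_mul_pow_self]; exact hm
  have e2 : m'.factorization q ∈ {k : ℕ | piP q m' * q ^ k ∈ M} := by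
    show piP q m' * q ^ m'.factorization q ∈ M
    rw [piP_mul_pow_self]; exact hm'
  rcases compat_nested s1 s2 with h | h
  · exact Or.inr (h e1)
  · exact Or.inl (h e2)

private lemma not_pedge_of_fact_ne {p q x y : ℕ} (hpq : q ≠ p) (hy : y ≠ 0)
    (hne : x.factorization q ≠ y.factorization q) : ¬ PEdge p x y := by
  intro hPE
  obtain ⟨e, he, hf⟩ := pedge_factorization hPE hy
  have := hf q
  rw [if_neg hpq] at this
  omega

private lemma adj_col {M : Finset ℕ} (h0 : 0 ∉ M) {p q m k : ℕ} (hq : q.Prime) (hpq : q ≠ p)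
    (hm : m ∈ M) (hk : k ≠ m.factorization q) (hmem : piP q m * q ^ k ∈ M) :
    (planeGraph M p).Adj ⟨m, hm⟩ ⟨piP q m * q ^ k, hmem⟩ := by
  have hm0 : m ≠ 0 := fun h => h0 (h ▸ hm)
  have h2 : piP q m * q ^ k ≠ 0 := fun h => h0 (h ▸ hmem)
  have hfq : (piP q m * q ^ k).factorization q = k := by
    rw [fact_piP_mul_pow hq hm0]; simp
  have hne : m ≠ piP q m * q ^ k := by
    intro h
    apply hk
    rw [← hfq, ← h]
  have hvne : m.factorization q ≠ (piP q m * q ^ k).factorization q := by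
    rw [hfq]; exact fun h => hk h.symm
  rcases Nat.lt_or_ge k (m.factorization q) with hlt | hge
  · refine ⟨fun h => hne (congrArg Subtype.val h),
      Or.inl ⟨⟨q, ?_⟩, not_pedge_of_fact_ne hpq h2 hvne⟩⟩
    have := pedge_col (piP q m) hq hlt
    rwa [piP_mul_pow_self] at this
  · have hgt : m.factorization q < k := by omega
    refine ⟨fun h => hne (congrArg Subtype.val h),
      Or.inr ⟨⟨q, ?_⟩, not_pedge_of_fact_ne hpq hm0 (Ne.symm hvne)⟩⟩
    have := pedge_col (piP q m) hq hgt
    rwa [piP_mul_pow_self] at this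

private lemma adj_fact_eq {M : Finset ℕ} (h0 : 0 ∉ M) {p : ℕ} {a b : {x : ℕ // x ∈ M}}
    (h : (planeGraph M p).Adj a b) : (a : ℕ).factorization p = (b : ℕ).factorization p := by
  have ha0 : (a : ℕ) ≠ 0 := fun h' => h0 (h' ▸ a.2)
  have hb0 : (b : ℕ) ≠ 0 := fun h' => h0 (h' ▸ b.2)
  obtain ⟨hne, hE⟩ := h
  rcases hE with ⟨⟨q, hq⟩, hnp⟩ | ⟨⟨q, hq⟩, hnp⟩
  · by_cases hqp : q = p
    · exact absurd (hqp ▸ hq) hnp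
    · obtain ⟨e, he, hf⟩ := pedge_factorization hq hb0
      have := hf p
      rw [if_neg (fun h' : p = q => hqp h'.symm)] at this
      omega
  · by_cases hqp : q = p
    · exact absurd (hqp ▸ hq) hnp
    · obtain ⟨e, he, hf⟩ := pedge_factorization hq ha0
      have := hf p
      rw [if_neg (fun h' : p = q => hqp h'.symm)] at this
      omega

private lemma reach_fact_eq {M : Finset ℕ} (h0 : 0 ∉ M) {p : ℕ} {a b : {x : ℕ // x ∈ M}}
    (h : (planeGraph M p).Reachable a b) :
    (a : ℕ).factorization p = (b : ℕ).factorization p := by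
  obtain ⟨w⟩ := h
  induction w with
  | nil => rfl
  | cons hadj _ ih => exact (adj_fact_eq h0 hadj).trans ih

private lemma reach_plane {M : Finset ℕ} (h0 : 0 ∉ M) {P : Finset ℕ} {exc : ℕ → ExcellentOrder}
    (hcomp : FinsetCompatible P exc M) (p : ℕ) (Q : Finset ℕ) :
    p ∉ Q → (∀ q ∈ Q, q.Prime) →
    ∀ m m' : ℕ, ∀ hm : m ∈ M, ∀ hm' : m' ∈ M,
      (∀ r, r ∉ Q → m.factorization r = m'.factorization r) →
      (planeGraph M p).Reachable ⟨m, hm⟩ ⟨m', hm'⟩ := by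
  induction Q using Finset.induction_on with
  | empty =>
    intro _ _ m m' hm hm' hagree
    have hm0 : m ≠ 0 := fun h => h0 (h ▸ hm)
    have hm'0 : m' ≠ 0 := fun h => h0 (h ▸ hm')
    have hmm : m = m' := Nat.factorization_inj hm0 hm'0
      (Finsupp.ext fun r => hagree r (Finset.notMem_empty r))
    subst hmm
    exact SimpleGraph.Reachable.refl _
  | @insert q Q hqQ ih =>
    intro hpQ hQp m m' hm hm' hagree
    have hq : q.Prime := hQp q (Finset.mem_insert_self q Q)
    have hpq : p ≠ q := fun h => hpQ (h ▸ Finset.mem_insert_self q Q)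
    have hpQ2 : p ∉ Q := fun h => hpQ (Finset.mem_insert_of_mem h)
    have hQ' : ∀ r ∈ Q, r.Prime := fun r hr => hQp r (Finset.mem_insert_of_mem hr)
    have hm0 : m ≠ 0 := fun h => h0 (h ▸ hm)
    have hm'0 : m' ≠ 0 := fun h => h0 (h ▸ hm')
    by_cases hvq : m.factorization q = m'.factorization q
    · refine ih hpQ2 hQ' m m' hm hm' (fun r hr => ?_)
      by_cases h : r = q
      · subst h; exact hvq
      · exact hagree r (fun hh => (Finset.mem_insert.mp hh).elim h hr)
    · have hdvd : ∃ x ∈ M, q ∣ x := by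
        by_cases h : m.factorization q = 0
        · have h' : m'.factorization q ≠ 0 := fun hh => hvq (h.trans hh.symm)
          exact ⟨m', hm', (hq.dvd_iff_one_le_factorization hm'0).mpr (by omega)⟩
        · exact ⟨m, hm, (hq.dvd_iff_one_le_factorization hm0).mpr (by omega)⟩
      rcases col_mem hcomp hq hdvd hm hm' with hmem | hmem
      · have hadj := adj_col h0 hq (Ne.symm hpq) hm (fun h => hvq h.symm) hmem
        have hr2 : (planeGraph M p).Reachable ⟨piP q m * q ^ m'.factorization q, hmem⟩
            ⟨m', hm'⟩ := by
          refine ih hpQ2 hQ' _ m' hmem hm' (fun r hr => ?_)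
          rw [fact_piP_mul_pow hq hm0]
          by_cases h : r = q
          · rw [if_pos h, h]
          · rw [if_neg h]
            exact hagree r (fun hh => (Finset.mem_insert.mp hh).elim h hr)
        exact hadj.reachable.trans hr2
      · have hadj := adj_col h0 hq (Ne.symm hpq) hm' (fun h => hvq h) hmem
        have hr2 : (planeGraph M p).Reachable ⟨m, hm⟩
            ⟨piP q m' * q ^ m.factorization q, hmem⟩ := by
          refine ih hpQ2 hQ' m _ hm hmem (fun r hr => ?_)
          rw [fact_piP_mul_pow hq hm'0]
          by_cases h : r = q
          · rw [if_pos h, h]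
          · rw [if_neg h]
            exact hagree r (fun hh => (Finset.mem_insert.mp hh).elim h hr)
        exact hr2.trans hadj.reachable.symm

private lemma fact_out {M : Finset ℕ} {P : Finset ℕ}
    (hPM : ∀ p : ℕ, p.Prime → (∃ m ∈ M, p ∣ m) → p ∈ P) {m : ℕ} (hm : m ∈ M) {r : ℕ}
    (hr : r ∉ P) : m.factorization r = 0 := by
  by_contra h
  have hmem : r ∈ m.primeFactors := by
    rw [← Nat.support_factorization]
    exact Finsupp.mem_support_iff.mpr h
  exact hr (hPM r (Nat.prime_of_mem_primeFactors hmem)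
    ⟨m, hm, Nat.dvd_of_mem_primeFactors hmem⟩)

private lemma level_reach {M : Finset ℕ} (h0 : 0 ∉ M) {P : Finset ℕ}
    (hP : ∀ p ∈ P, p.Prime)
    (hPM : ∀ p : ℕ, p.Prime → (∃ m ∈ M, p ∣ m) → p ∈ P) {exc : ℕ → ExcellentOrder}
    (hcomp : FinsetCompatible P exc M) (p : ℕ)
    {m m' : ℕ} (hm : m ∈ M) (hm' : m' ∈ M) (h : m.factorization p = m'.factorization p) :
    (planeGraph M p).Reachable ⟨m, hm⟩ ⟨m', hm'⟩ :=
  reach_plane h0 hcomp p (P.erase p) (Finset.notMem_erase p P)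
    (fun q hq => hP q (Finset.mem_of_mem_erase hq)) m m' hm hm'
    (fun r hr => by
      by_cases hrp : r = p
      · subst hrp; exact h
      · have hrP : r ∉ P := fun hh => hr (Finset.mem_erase.mpr ⟨hrp, hh⟩)
        rw [fact_out hPM hm hrP, fact_out hPM hm' hrP])

private lemma plane_le_full {M : Finset ℕ} (p : ℕ) : planeGraph M p ≤ fullGraph M := by
  intro a b h
  exact ⟨h.1, h.2.imp And.left And.left⟩

private lemma plane_le_sp {M : Finset ℕ} (p : ℕ) : planeGraph M p ≤ spGraph M p := by
  intro a b h
  exact ⟨h.1, h.2.imp (fun hx => ⟨hx.1, fun hh => hx.2 hh.1⟩)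
    (fun hx => ⟨hx.1, fun hh => hx.2 hh.1⟩)⟩

/-- Lemma 2.7 (b). -/
theorem statement1 (M : Finset ℕ) (hM : M.Nonempty) (h0 : 0 ∉ M)
    (P : Finset ℕ) (hP : ∀ p ∈ P, p.Prime)
    (hPM : ∀ p : ℕ, p.Prime → (∃ m ∈ M, p ∣ m) → p ∈ P)
    (exc : ℕ → ExcellentOrder)
    (hcomp : FinsetCompatible P exc M) :
    (fullGraph M).Connected ∧ (∀ p : ℕ, p.Prime → PropS M p) ∧ ConditionI M := by
  have hne0 : ∀ m ∈ M, m ≠ 0 := fun m hm h => h0 (h ▸ hm)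
  -- Connectivity of the full graph
  have hpre : (fullGraph M).Preconnected := by
    rintro ⟨m, hm⟩ ⟨m', hm'⟩
    have h0P : (0 : ℕ) ∉ P := fun h => Nat.not_prime_zero (hP 0 h)
    have hplane := reach_plane h0 hcomp 0 P h0P hP m m' hm hm'
      (fun r hr => by rw [fact_out hPM hm hr, fact_out hPM hm' hr])
    exact SimpleGraph.Reachable.mono (plane_le_full 0) hplane
  have hnonempty : Nonempty {x : ℕ // x ∈ M} := ⟨⟨hM.choose, hM.choose_spec⟩⟩
  have hconn : (fullGraph M).Connected := ⟨hpre⟩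
  -- (T_p) for every prime p
  have hT : ∀ p : ℕ, p.Prime → PropT M p := by
    intro p hp
    obtain ⟨mA, hmA, hmax⟩ := M.exists_max_image (fun m => m.factorization p) hM
    refine ⟨(planeGraph M p).connectedComponentMk ⟨mA, hmA⟩, ?_, ?_⟩
    · intro m₁ h₁ m₂ h₂ hPE heq
      have hfe := reach_fact_eq h0 (SimpleGraph.ConnectedComponent.eq.mp heq)
      obtain ⟨e, he, hf⟩ := pedge_factorization hPE (hne0 m₂ h₂)
      have hfp := hf p
      rw [if_pos rfl] at hfp
      have hle := hmax m₁ h₁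
      simp only at hfe hle
      omega
    · intro c hc
      obtain ⟨⟨m', hm'⟩, hmk⟩ := c.exists_rep
      have ha_le : m'.factorization p ≤ mA.factorization p := hmax m' hm'
      rcases eq_or_lt_of_le ha_le with hlev | hlt
      · rw [← hmk]
        exact SimpleGraph.ConnectedComponent.sound
          (level_reach h0 hP hPM hcomp p hm' hmA hlev)
      · exfalso
        have hdvd : ∃ x ∈ M, p ∣ x :=
          ⟨mA, hmA, (hp.dvd_iff_one_le_factorization (hne0 mA hmA)).mpr (by omega)⟩
        rcases col_mem hcomp hp hdvd hmA hm' with hmem | hmem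
        · have hfu : (piP p mA * p ^ m'.factorization p).factorization p
              = m'.factorization p := by
            rw [fact_piP_mul_pow hp (hne0 mA hmA)]; simp
          have hcu : (planeGraph M p).connectedComponentMk
              ⟨piP p mA * p ^ m'.factorization p, hmem⟩ = c := by
            rw [← hmk]
            exact SimpleGraph.ConnectedComponent.sound
              (level_reach h0 hP hPM hcomp p hmem hm' hfu)
          have hPE : PEdge p mA (piP p mA * p ^ m'.factorization p) := by
            have hpc := pedge_col (piP p mA) hp hlt
            rwa [piP_mul_pow_self] at hpc
          exact hc mA hmA _ hmem hPE hcu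
        · have hPE : PEdge p (piP p m' * p ^ mA.factorization p) m' := by
            have hpc := pedge_col (piP p m') hp hlt
            rwa [piP_mul_pow_self] at hpc
          exact hc _ hmem m' hm' hPE hmk
  -- (S_p) for every prime p
  have hS : ∀ p : ℕ, p.Prime → PropS M p := by
    intro p hp
    obtain ⟨mA, hmA, hmax⟩ := M.exists_max_image (fun m => m.factorization p) hM
    have hcl : ∀ x : ℕ, ∀ hx : x ∈ M, ∀ y : ℕ, ∀ hy : y ∈ M,
        ((x.factorization p = mA.factorization p ∧ y.factorization p = mA.factorization p) ∨
         (x.factorization p < mA.factorization p ∧ y.factorization p < mA.factorization p)) →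
        (spGraph M p).Reachable ⟨x, hx⟩ ⟨y, hy⟩ := by
      intro x hx y hy hcase
      rcases hcase with ⟨h1, h2⟩ | ⟨h1, h2⟩
      · exact SimpleGraph.Reachable.mono (plane_le_sp p)
          (level_reach h0 hP hPM hcomp p hx hy (h1.trans h2.symm))
      · by_cases hxy : x.factorization p = y.factorization p
        · exact SimpleGraph.Reachable.mono (plane_le_sp p)
            (level_reach h0 hP hPM hcomp p hx hy hxy)
        · have hdvd : ∃ z ∈ M, p ∣ z :=
            ⟨mA, hmA, (hp.dvd_iff_one_le_factorization (hne0 mA hmA)).mpr (by omega)⟩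
          have SC : ∀ z : ℕ, z ∈ M → SubsetCompatible (exc p) {k : ℕ | piP p z * p ^ k ∈ M} :=
            fun z hz => hcomp.2 p hp hdvd (piP p z) ⟨z, hz, rfl⟩
          have selfm : ∀ z : ℕ, ∀ hz : z ∈ M, piP p z * p ^ z.factorization p ∈ M :=
            fun z hz => by rw [piP_mul_pow_self]; exact hz
          have htriple : ∃ z : ℕ, ∃ hz : z ∈ M,
              piP p z * p ^ x.factorization p ∈ M ∧ piP p z * p ^ y.factorization p ∈ M ∧
              piP p z * p ^ mA.factorization p ∈ M := by
            rcases compat_nested (SC x hx) (SC y hy) with hxy' | hxy' <;>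
            rcases compat_nested (SC x hx) (SC mA hmA) with hxA | hxA <;>
            rcases compat_nested (SC y hy) (SC mA hmA) with hyA | hyA
            · exact ⟨mA, hmA, hxA (selfm x hx), hyA (selfm y hy), selfm mA hmA⟩
            · exact ⟨y, hy, hxy' (selfm x hx), selfm y hy, hyA (selfm mA hmA)⟩
            · exact ⟨y, hy, hxy' (selfm x hx), selfm y hy, hxy' (hxA (selfm mA hmA))⟩
            · exact ⟨y, hy, hxy' (selfm x hx), selfm y hy, hyA (selfm mA hmA)⟩
            · exact ⟨mA, hmA, hxA (selfm x hx), hyA (selfm y hy), selfm mA hmA⟩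
            · exact ⟨x, hx, selfm x hx, hxy' (selfm y hy), hxy' (hyA (selfm mA hmA))⟩
            · exact ⟨x, hx, selfm x hx, hxy' (selfm y hy), hxA (selfm mA hmA)⟩
            · exact ⟨x, hx, selfm x hx, hxy' (selfm y hy), hxA (selfm mA hmA)⟩
          obtain ⟨z, hz, hux, huy, huA⟩ := htriple
          have hz0 : z ≠ 0 := hne0 z hz
          have hza : (piP p z * p ^ x.factorization p).factorization p = x.factorization p := by
            rw [fact_piP_mul_pow hp hz0]; simp
          have hzb : (piP p z * p ^ y.factorization p).factorization p = y.factorization p := by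
            rw [fact_piP_mul_pow hp hz0]; simp
          have r1 : (spGraph M p).Reachable ⟨x, hx⟩ ⟨piP p z * p ^ x.factorization p, hux⟩ :=
            SimpleGraph.Reachable.mono (plane_le_sp p)
              (level_reach h0 hP hPM hcomp p hx hux hza.symm)
          have r3 : (spGraph M p).Reachable ⟨piP p z * p ^ y.factorization p, huy⟩ ⟨y, hy⟩ :=
            SimpleGraph.Reachable.mono (plane_le_sp p)
              (level_reach h0 hP hPM hcomp p huy hy hzb)
          have hne' : piP p z * p ^ x.factorization p ≠ piP p z * p ^ y.factorization p := by
            intro h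
            exact hxy (by rw [← hza, h, hzb])
          have r2 : (spGraph M p).Adj ⟨piP p z * p ^ x.factorization p, hux⟩
              ⟨piP p z * p ^ y.factorization p, huy⟩ := by
            refine ⟨fun h => hne' (congrArg Subtype.val h), ?_⟩
            rcases Nat.lt_or_ge (x.factorization p) (y.factorization p) with hab | hab
            · refine Or.inr ⟨⟨p, pedge_col (piP p z) hp hab⟩, fun hH => ?_⟩
              exact hH.2 (piP p z * p ^ mA.factorization p) huA (pedge_col (piP p z) hp h2)
            · have hab' : y.factorization p < x.factorization p := by omega
              refine Or.inl ⟨⟨p, pedge_col (piP p z) hp hab'⟩, fun hH => ?_⟩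
              exact hH.2 (piP p z * p ^ mA.factorization p) huA (pedge_col (piP p z) hp h1)
          exact (r1.trans r2.reachable).trans r3
    intro c₁ c₂ c₃
    obtain ⟨⟨x₁, h₁⟩, hk₁⟩ := c₁.exists_rep
    obtain ⟨⟨x₂, h₂⟩, hk₂⟩ := c₂.exists_rep
    obtain ⟨⟨x₃, h₃⟩, hk₃⟩ := c₃.exists_rep
    have hle₁ : x₁.factorization p ≤ mA.factorization p := hmax x₁ h₁
    have hle₂ : x₂.factorization p ≤ mA.factorization p := hmax x₂ h₂
    have hle₃ : x₃.factorization p ≤ mA.factorization p := hmax x₃ h₃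
    by_cases e₁ : x₁.factorization p = mA.factorization p <;>
    by_cases e₂ : x₂.factorization p = mA.factorization p <;>
    by_cases e₃ : x₃.factorization p = mA.factorization p
    · exact Or.inl (by
        rw [← hk₁, ← hk₂]
        exact SimpleGraph.ConnectedComponent.sound (hcl x₁ h₁ x₂ h₂ (Or.inl ⟨e₁, e₂⟩)))
    · exact Or.inl (by
        rw [← hk₁, ← hk₂]
        exact SimpleGraph.ConnectedComponent.sound (hcl x₁ h₁ x₂ h₂ (Or.inl ⟨e₁, e₂⟩)))
    · exact Or.inr (Or.inl (by
        rw [← hk₁, ← hk₃]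
        exact SimpleGraph.ConnectedComponent.sound (hcl x₁ h₁ x₃ h₃ (Or.inl ⟨e₁, e₃⟩))))
    · exact Or.inr (Or.inr (by
        rw [← hk₂, ← hk₃]
        exact SimpleGraph.ConnectedComponent.sound (hcl x₂ h₂ x₃ h₃
          (Or.inr ⟨lt_of_le_of_ne hle₂ e₂, lt_of_le_of_ne hle₃ e₃⟩))))
    · exact Or.inr (Or.inr (by
        rw [← hk₂, ← hk₃]
        exact SimpleGraph.ConnectedComponent.sound (hcl x₂ h₂ x₃ h₃ (Or.inl ⟨e₂, e₃⟩))))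
    · exact Or.inr (Or.inl (by
        rw [← hk₁, ← hk₃]
        exact SimpleGraph.ConnectedComponent.sound (hcl x₁ h₁ x₃ h₃
          (Or.inr ⟨lt_of_le_of_ne hle₁ e₁, lt_of_le_of_ne hle₃ e₃⟩))))
    · exact Or.inl (by
        rw [← hk₁, ← hk₂]
        exact SimpleGraph.ConnectedComponent.sound (hcl x₁ h₁ x₂ h₂
          (Or.inr ⟨lt_of_le_of_ne hle₁ e₁, lt_of_le_of_ne hle₂ e₂⟩)))
    · exact Or.inl (by
        rw [← hk₁, ← hk₂]
        exact SimpleGraph.ConnectedComponent.sound (hcl x₁ h₁ x₂ h₂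
          (Or.inr ⟨lt_of_le_of_ne hle₁ e₁, lt_of_le_of_ne hle₂ e₂⟩)))
  exact ⟨hconn, fun p hp => hS p hp, hconn, hS 2 Nat.prime_two, fun p hp _ => hT p hp⟩


end WeightPaper
end

section
/- An integer weight system (v₁,…,v_n; d) satisfies condition (C2bar) if and only if the polynomial ∏_{j=1}^n (t^{v_j} − 1) divides the polynomial t^{v₁+⋯+v_n}·∏_{j=1}^n (t^{d−v_j} − 1) in ℤ[t], i.e. if and only if the rational function ρ_{(v;d)}(t) := t^{v₁+⋯+v_n}·∏_{j=1}^n (t^{d−v_j}−1)/(t^{v_j}−1) is a polynomial with integer coefficients. (Lemma 5.4 (c)) -/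
open Polynomial TensorProduct

namespace WeightPaper

private lemma bezout_finset {n : ℕ} (v : Fin n → ℕ) (J : Finset (Fin n)) :
    ∃ α : Fin n → ℤ, ∑ i ∈ J, α i * (v i : ℤ) = J.gcd (fun i => (v i : ℤ)) := by
  classical
  induction J using Finset.induction_on with
  | empty => exact ⟨0, by simp⟩
  | @insert a s ha ih =>
    obtain ⟨β, hβ⟩ := ih
    set g : ℤ := s.gcd (fun i => (v i : ℤ)) with hg
    refine ⟨fun i => if i = a then Int.gcdA (v a) g else Int.gcdB (v a) g * β i, ?_⟩
    rw [Finset.sum_insert ha, Finset.gcd_insert, ← Int.coe_gcd, Int.gcd_eq_gcd_ab, ← hg]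
    beta_reduce
    rw [if_pos rfl]
    have h2 : ∑ i ∈ s, (if i = a then Int.gcdA (v a) g else Int.gcdB (v a) g * β i) * (v i : ℤ)
        = Int.gcdB (v a) g * g := by
      rw [← hβ, Finset.mul_sum]
      refine Finset.sum_congr rfl fun i hi => ?_
      rw [if_neg (by rintro rfl; exact ha hi)]
      ring
    rw [h2]
    ring

private lemma le_of_pow_dvd_pow_mul {R : Type*} [CommRing R] [IsDomain R] {p r : R}
    (hp : Prime p) (hr : ¬ p ∣ r) {a b : ℕ} (h : p ^ a ∣ p ^ b * r) : a ≤ b := by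
  by_contra hab
  push_neg at hab
  have h1 : p ^ (b + 1) ∣ p ^ b * r := dvd_trans (pow_dvd_pow p hab) h
  rw [pow_succ] at h1
  exact hr ((mul_dvd_mul_iff_left (pow_ne_zero b hp.ne_zero)).mp h1)

private lemma cyclotomic_prime_int {m : ℕ} (hm : 0 < m) : Prime (Polynomial.cyclotomic m ℤ) :=
  UniqueFactorizationMonoid.irreducible_iff_prime.mp (Polynomial.cyclotomic.irreducible hm)

private lemma cyclotomic_not_dvd_X_pow {m k : ℕ} (hm : 0 < m) :
    ¬ (Polynomial.cyclotomic m ℤ ∣ (Polynomial.X : Polynomial ℤ) ^ k) := by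
  intro h
  have hp := cyclotomic_prime_int hm
  have hX : Polynomial.cyclotomic m ℤ ∣ Polynomial.X := hp.dvd_of_dvd_pow h
  have heq : Polynomial.cyclotomic m ℤ = Polynomial.X :=
    Polynomial.eq_of_monic_of_associated (Polynomial.cyclotomic.monic m ℤ) Polynomial.monic_X
      ((Polynomial.cyclotomic.irreducible hm).associated_of_dvd Polynomial.irreducible_X hX)
  have h0 : (Polynomial.cyclotomic m ℤ).coeff 0 = 0 := by rw [heq]; simp
  rcases eq_or_lt_of_le (Nat.one_le_iff_ne_zero.mpr hm.ne') with h1 | h2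
  · rw [← h1, Polynomial.cyclotomic_one] at h0
    simp at h0
  · rw [Polynomial.cyclotomic_coeff_zero ℤ h2] at h0
    exact one_ne_zero h0

private lemma cyclotomic_dvd_cyclotomic_int {m m' : ℕ} (hm : 0 < m) (hm' : 0 < m')
    (h : Polynomial.cyclotomic m ℤ ∣ Polynomial.cyclotomic m' ℤ) : m = m' := by
  have heq : Polynomial.cyclotomic m ℤ = Polynomial.cyclotomic m' ℤ :=
    Polynomial.eq_of_monic_of_associated (Polynomial.cyclotomic.monic m ℤ)
      (Polynomial.cyclotomic.monic m' ℤ)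
      ((Polynomial.cyclotomic.irreducible hm).associated_of_dvd
        (Polynomial.cyclotomic.irreducible hm') h)
  exact Polynomial.cyclotomic_injective heq

private lemma prod_X_pow_sub_one_eq {n : ℕ} (w : Fin n → ℕ) (d : ℕ) (hw : ∀ j, 0 < w j)
    (hwd : ∀ j, w j ≤ d) :
    (∏ j : Fin n, ((Polynomial.X : Polynomial ℤ) ^ (w j) - 1)) =
      ∏ m ∈ Finset.Icc 1 d, (Polynomial.cyclotomic m ℤ) ^
        (Finset.univ.filter (fun j => m ∣ w j)).card := by
  classical
  have h1 : ∀ j : Fin n, ((Polynomial.X : Polynomial ℤ) ^ (w j) - 1)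
      = ∏ m ∈ (Finset.Icc 1 d).filter (fun m => m ∣ w j), Polynomial.cyclotomic m ℤ := by
    intro j
    rw [← Polynomial.prod_cyclotomic_eq_X_pow_sub_one (hw j) ℤ]
    congr 1
    ext m
    simp only [Nat.mem_divisors, Finset.mem_filter, Finset.mem_Icc]
    constructor
    · rintro ⟨hm, -⟩
      have hm0 : m ≠ 0 := by rintro rfl; exact (hw j).ne' (zero_dvd_iff.mp hm)
      exact ⟨⟨Nat.one_le_iff_ne_zero.mpr hm0, le_trans (Nat.le_of_dvd (hw j) hm) (hwd j)⟩, hm⟩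
    · rintro ⟨-, hm⟩
      exact ⟨hm, (hw j).ne'⟩
  calc (∏ j : Fin n, ((Polynomial.X : Polynomial ℤ) ^ (w j) - 1))
      = ∏ j : Fin n, ∏ m ∈ (Finset.Icc 1 d).filter (fun m => m ∣ w j),
          Polynomial.cyclotomic m ℤ := Finset.prod_congr rfl fun j _ => h1 j
    _ = ∏ j : Fin n, ∏ m ∈ Finset.Icc 1 d,
          (if m ∣ w j then Polynomial.cyclotomic m ℤ else 1) :=
        Finset.prod_congr rfl fun j _ => Finset.prod_filter _ _
    _ = ∏ m ∈ Finset.Icc 1 d, ∏ j : Fin n,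
          (if m ∣ w j then Polynomial.cyclotomic m ℤ else 1) := Finset.prod_comm
    _ = ∏ m ∈ Finset.Icc 1 d, (Polynomial.cyclotomic m ℤ) ^
          (Finset.univ.filter (fun j => m ∣ w j)).card := by
        refine Finset.prod_congr rfl fun m _ => ?_
        rw [← Finset.prod_filter, Finset.prod_const]



/-- Lemma 5.4 (c). -/
theorem statement8 (n : ℕ) (hn : 1 ≤ n) (v : Fin n → ℕ) (d : ℕ)
    (hv : ∀ i, 0 < v i) (hvd : ∀ i, v i < d) :
    CondC2bar v d ↔
      (∏ j : Fin n, ((Polynomial.X : Polynomial ℤ) ^ (v j) - 1)) ∣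
        (Polynomial.X ^ (∑ j : Fin n, v j) *
          ∏ j : Fin n, ((Polynomial.X : Polynomial ℤ) ^ (d - v j) - 1)) := by
  classical
  set a : ℕ → ℕ := fun m => (Finset.univ.filter (fun j => m ∣ v j)).card with ha
  set b : ℕ → ℕ := fun m => (Finset.univ.filter (fun j => m ∣ d - v j)).card with hb
  have hEA : (∏ j : Fin n, ((Polynomial.X : Polynomial ℤ) ^ (v j) - 1)) =
      ∏ m ∈ Finset.Icc 1 d, (Polynomial.cyclotomic m ℤ) ^ a m :=
    prod_X_pow_sub_one_eq v d hv (fun j => (hvd j).le)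
  have hEB : (∏ j : Fin n, ((Polynomial.X : Polynomial ℤ) ^ (d - v j) - 1)) =
      ∏ m ∈ Finset.Icc 1 d, (Polynomial.cyclotomic m ℤ) ^ b m :=
    prod_X_pow_sub_one_eq (fun j => d - v j) d
      (fun j => by show 0 < d - v j; have := hvd j; omega)
      (fun j => by show d - v j ≤ d; omega)
  -- Step 1: counts ↔ dvd
  have step2 : (∀ m : ℕ, 0 < m → a m ≤ b m) ↔
      (∏ j : Fin n, ((Polynomial.X : Polynomial ℤ) ^ (v j) - 1)) ∣
        (Polynomial.X ^ (∑ j : Fin n, v j) *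
          ∏ j : Fin n, ((Polynomial.X : Polynomial ℤ) ^ (d - v j) - 1)) := by
    rw [hEA, hEB]
    constructor
    · intro h
      refine Dvd.dvd.mul_left ?_ _
      exact Finset.prod_dvd_prod_of_dvd _ _ fun m hm =>
        pow_dvd_pow _ (h m (Finset.mem_Icc.mp hm).1)
    · intro hdvd m hm
      by_cases hmd : m ≤ d
      · have hmem : m ∈ Finset.Icc 1 d := Finset.mem_Icc.mpr ⟨hm, hmd⟩
        have hp := cyclotomic_prime_int hm
        have hAle : (Polynomial.cyclotomic m ℤ) ^ a m ∣
            ∏ m' ∈ Finset.Icc 1 d, (Polynomial.cyclotomic m' ℤ) ^ a m' :=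
          Finset.dvd_prod_of_mem _ hmem
        have hBsplit : ∏ m' ∈ Finset.Icc 1 d, (Polynomial.cyclotomic m' ℤ) ^ b m' =
            (Polynomial.cyclotomic m ℤ) ^ b m *
              ∏ m' ∈ (Finset.Icc 1 d).erase m, (Polynomial.cyclotomic m' ℤ) ^ b m' :=
          (Finset.mul_prod_erase _ _ hmem).symm
        have hmain : (Polynomial.cyclotomic m ℤ) ^ a m ∣
            (Polynomial.cyclotomic m ℤ) ^ b m *
              ((Polynomial.X : Polynomial ℤ) ^ (∑ j : Fin n, v j) *
                ∏ m' ∈ (Finset.Icc 1 d).erase m, (Polynomial.cyclotomic m' ℤ) ^ b m') := by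
          refine hAle.trans (hdvd.trans (dvd_of_eq ?_))
          rw [hBsplit]; ring
        refine le_of_pow_dvd_pow_mul hp ?_ hmain
        intro hdr
        rcases hp.dvd_mul.mp hdr with h1 | h1
        · exact cyclotomic_not_dvd_X_pow hm h1
        · obtain ⟨m', hm'mem, hm'dvd⟩ := hp.exists_mem_finset_dvd h1
          have hm'pos : 0 < m' := (Finset.mem_Icc.mp (Finset.mem_of_mem_erase hm'mem)).1
          have : m = m' := cyclotomic_dvd_cyclotomic_int hm hm'pos (hp.dvd_of_dvd_pow hm'dvd)
          exact (Finset.ne_of_mem_erase hm'mem) this.symm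
      · -- m > d : a m = 0
        have : a m = 0 := by
          rw [ha]
          simp only [Finset.card_eq_zero, Finset.filter_eq_empty_iff]
          intro j _ hdvdj
          exact hmd (le_trans (Nat.le_of_dvd (hv j) hdvdj) (hvd j).le)
        omega
  rw [← step2]
  -- Step 2: C2bar ↔ counts
  constructor
  · intro hC m hm
    rcases Finset.eq_empty_or_nonempty (Finset.univ.filter (fun j => m ∣ v j)) with he | hne
    · simp only [ha, he, Finset.card_empty]
      omega
    · obtain ⟨K, hKcard, hKspec⟩ := hC _ hne
      have hKsub : K ⊆ Finset.univ.filter (fun j => m ∣ d - v j) := by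
        intro k hk
        obtain ⟨α, hα⟩ := hKspec k hk
        have hdvd : (m : ℤ) ∣ (d : ℤ) - (v k : ℤ) := by
          rw [← hα]
          refine Finset.dvd_sum fun i hi => ?_
          have : m ∣ v i := (Finset.mem_filter.mp hi).2
          exact Dvd.dvd.mul_left (Int.natCast_dvd_natCast.mpr this) _
        have hcast : ((d - v k : ℕ) : ℤ) = (d : ℤ) - (v k : ℤ) := by
          rw [Nat.cast_sub (hvd k).le]
        rw [← hcast] at hdvd
        exact Finset.mem_filter.mpr ⟨Finset.mem_univ k, Int.natCast_dvd_natCast.mp hdvd⟩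
      calc a m = K.card := hKcard.symm
        _ ≤ b m := Finset.card_le_card hKsub
  · intro hcount J hJ
    set gZ : ℤ := J.gcd (fun i => (v i : ℤ)) with hgZ
    have hnn : 0 ≤ gZ := by
      have h1 : |gZ| = gZ := by rw [Int.abs_eq_normalize, Finset.normalize_gcd]
      rw [← h1]; exact abs_nonneg gZ
    set m : ℕ := gZ.toNat with hmdef
    have hmz : (m : ℤ) = gZ := Int.toNat_of_nonneg hnn
    have hm0 : 0 < m := by
      rcases Nat.eq_zero_or_pos m with h0 | h0
      · exfalso
        have : gZ = 0 := by rw [← hmz, h0]; simp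
        obtain ⟨i, hi⟩ := hJ
        have := Finset.gcd_eq_zero_iff.mp this i hi
        simp only [Int.natCast_eq_zero] at this
        exact (hv i).ne' this
      · exact h0
    have hJsub : J ⊆ Finset.univ.filter (fun j => m ∣ v j) := by
      intro i hi
      have : gZ ∣ (v i : ℤ) := Finset.gcd_dvd hi
      rw [← hmz] at this
      exact Finset.mem_filter.mpr ⟨Finset.mem_univ i, Int.natCast_dvd_natCast.mp this⟩
    have hcard : J.card ≤ b m := le_trans (Finset.card_le_card hJsub) (hcount m hm0)
    obtain ⟨K, hKsub, hKcard⟩ := Finset.exists_subset_card_eq hcard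
    refine ⟨K, hKcard, fun k hk => ?_⟩
    have hmk : m ∣ d - v k := (Finset.mem_filter.mp (hKsub hk)).2
    obtain ⟨c, hc⟩ := hmk
    obtain ⟨β, hβ⟩ := bezout_finset v J
    refine ⟨fun i => (c : ℤ) * β i, ?_⟩
    have hsum : ∑ i ∈ J, ((c : ℤ) * β i) * (v i : ℤ) = (c : ℤ) * gZ := by
      rw [hgZ, ← hβ, Finset.mul_sum]
      exact Finset.sum_congr rfl fun i _ => by ring
    have hcast : (d : ℤ) - (v k : ℤ) = (m : ℤ) * (c : ℤ) := by
      rw [← Nat.cast_sub (hvd k).le, hc]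
      push_cast
      ring
    rw [hsum, hcast, hmz]
    ring

end WeightPaper
end

section
/- Let (v₁,…,v_n; d) be an integer weight system satisfying condition (C2bar), and let P ∈ ℤ[t] be the polynomial with P(t)·∏_{j=1}^n (t^{v_j} − 1) = t^{v₁+⋯+v_n}·∏_{j=1}^n (t^{d−v_j} − 1). Then for every k ∈ ℕ₀, P(e^{2πik/d}) = (−1)^{n−|M(k)|}·μ(k); in particular, μ(k) is a positive integer for every k ∈ ℕ. (Lemma 5.4 (d)) -/
open Polynomial TensorProduct

namespace WeightPaper

/-- Lemma 5.4 (d). -/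
theorem statement9 (n : ℕ) (hn : 1 ≤ n) (v : Fin n → ℕ) (d : ℕ)
    (hv : ∀ i, 0 < v i) (hvd : ∀ i, v i < d)
    (s t : Fin n → ℕ) (hpos : ∀ i, 0 < s i ∧ 0 < t i)
    (hst : ∀ i, v i * t i = s i * d) (hcop : ∀ i, Nat.Coprime (s i) (t i))
    (hC2bar : CondC2bar v d)
    (P : Polynomial ℤ)
    (hP : P * ∏ j : Fin n, ((Polynomial.X : Polynomial ℤ) ^ (v j) - 1) =
        Polynomial.X ^ (∑ j : Fin n, v j) *
          ∏ j : Fin n, ((Polynomial.X : Polynomial ℤ) ^ (d - v j) - 1)) :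
    (∀ k : ℕ,
      Polynomial.aeval (Complex.exp (2 * Real.pi * Complex.I * k / d)) P =
        (-1 : ℂ) ^ (n - (Finset.univ.filter (fun j : Fin n => t j ∣ k)).card) *
          ∏ j ∈ Finset.univ.filter (fun j : Fin n => t j ∣ k),
            (((d : ℂ) - (v j : ℂ)) / (v j : ℂ)))
    ∧ ∀ k : ℕ, 0 < k → ∃ a : ℕ, 0 < a ∧
        (∏ j ∈ Finset.univ.filter (fun j : Fin n => t j ∣ k),
          (((d : ℚ) - (v j : ℚ)) / (v j : ℚ))) = (a : ℚ) := by
  have hd : 0 < d := (hv ⟨0, hn⟩).trans (hvd ⟨0, hn⟩)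
  have hdC : (d : ℂ) ≠ 0 := Nat.cast_ne_zero.mpr hd.ne'
  have key : ∀ k : ℕ,
      Polynomial.aeval (Complex.exp (2 * Real.pi * Complex.I * k / d)) P =
        (-1 : ℂ) ^ (n - (Finset.univ.filter (fun j : Fin n => t j ∣ k)).card) *
          ∏ j ∈ Finset.univ.filter (fun j : Fin n => t j ∣ k),
            (((d : ℂ) - (v j : ℂ)) / (v j : ℂ)) := by
    intro k
    set ζ : ℂ := Complex.exp (2 * Real.pi * Complex.I * k / d) with hζdef
    have hζ0 : ζ ≠ 0 := Complex.exp_ne_zero _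
    have h2pi : (2 * Real.pi * Complex.I : ℂ) ≠ 0 := by
      simp [Real.pi_ne_zero, Complex.I_ne_zero]
    -- root of unity characterization
    have hpowiff : ∀ e : ℕ, ζ ^ e = 1 ↔ d ∣ k * e := by
      intro e
      have hpow : ζ ^ e = Complex.exp ((((k * e : ℕ) : ℂ) / d) * (2 * Real.pi * Complex.I)) := by
        rw [hζdef, ← Complex.exp_nat_mul]
        congr 1
        push_cast
        ring
      rw [hpow, Complex.exp_eq_one_iff]
      constructor
      · rintro ⟨m, hm⟩
        have h1 : ((k * e : ℕ) : ℂ) / d = (m : ℂ) := mul_right_cancel₀ h2pi hm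
        have h2 : ((k * e : ℕ) : ℂ) = (m : ℂ) * d := by
          field_simp at h1; push_cast at h1 ⊢; linear_combination h1
        have h3 : ((k * e : ℕ) : ℤ) = m * d := by exact_mod_cast h2
        have h4 : (d : ℤ) ∣ ((k * e : ℕ) : ℤ) := ⟨m, by rw [h3]; ring⟩
        exact_mod_cast h4
      · rintro ⟨c, hc⟩
        refine ⟨c, ?_⟩
        have : ((k * e : ℕ) : ℂ) / d = (c : ℂ) := by
          rw [hc]; push_cast; field_simp
        rw [this]; norm_cast
    have hζd : ζ ^ d = 1 := (hpowiff d).mpr ⟨k, mul_comm k d⟩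
    have hmem : ∀ j, t j ∣ k ↔ ζ ^ (v j) = 1 := by
      intro j
      rw [hpowiff]
      constructor
      · rintro ⟨c, hc⟩
        refine ⟨c * s j, ?_⟩
        calc k * v j = c * (v j * t j) := by rw [hc]; ring
          _ = c * (s j * d) := by rw [hst j]
          _ = d * (c * s j) := by ring
      · intro hdvd
        have h1 : d * t j ∣ (k * v j) * t j := mul_dvd_mul_right hdvd (t j)
        have h2 : (k * v j) * t j = (k * s j) * d := by
          calc (k * v j) * t j = k * (v j * t j) := by ring
            _ = k * (s j * d) := by rw [hst j]
            _ = (k * s j) * d := by ring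
        rw [h2, mul_comm d (t j)] at h1
        have h3 : t j ∣ k * s j := (Nat.mul_dvd_mul_iff_right hd).mp h1
        exact (Nat.Coprime.dvd_of_dvd_mul_right (hcop j).symm) h3
    set M : Finset (Fin n) := Finset.univ.filter (fun j : Fin n => t j ∣ k) with hMdef
    set N : Finset (Fin n) := Finset.univ.filter (fun j : Fin n => ¬ t j ∣ k) with hNdef
    set m := M.card with hmdef
    have hMv : ∀ j ∈ M, ζ ^ (v j) = 1 := by
      intro j hj
      rw [hMdef, Finset.mem_filter] at hj
      exact (hmem j).mp hj.2
    have hMdv : ∀ j ∈ M, ζ ^ (d - v j) = 1 := by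
      intro j hj
      have h1 : ζ ^ (d - v j) * ζ ^ (v j) = 1 := by
        rw [← pow_add, Nat.sub_add_cancel (hvd j).le, hζd]
      rwa [hMv j hj, mul_one] at h1
    have hNv : ∀ j ∈ N, ζ ^ (v j) - 1 ≠ 0 := by
      intro j hj
      rw [hNdef, Finset.mem_filter] at hj
      exact sub_ne_zero.mpr (fun h => hj.2 ((hmem j).mpr h))
    have hcardMN : m + N.card = n := by
      rw [hmdef, hMdef, hNdef, Finset.card_filter_add_card_filter_not,
        Finset.card_univ, Fintype.card_fin]
    have hcardN : N.card = n - m := by omega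
    -- the geometric-sum cofactors
    set g : ℕ → Polynomial ℂ := fun e => ∑ i ∈ Finset.range e, X ^ i * (C ζ) ^ (e - 1 - i)
      with hgdef
    have hfac : ∀ e : ℕ, ζ ^ e = 1 → (X : Polynomial ℂ) ^ e - 1 = g e * (X - C ζ) := by
      intro e he
      rw [hgdef]
      rw [geom_sum₂_mul, ← C_pow, he, map_one]
    have hgeval : ∀ e : ℕ, 0 < e → ζ ^ e = 1 → Polynomial.eval ζ (g e) = (e : ℂ) * ζ⁻¹ := by
      intro e he h1
      have hz : ζ ^ (e - 1) = ζ⁻¹ := by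
        refine eq_inv_of_mul_eq_one_left ?_
        rw [← pow_succ, Nat.sub_add_cancel he, h1]
      rw [hgdef]
      simp only [eval_finset_sum, eval_mul, eval_pow, eval_X, eval_C]
      rw [Finset.sum_congr rfl (fun i hi => ?_), Finset.sum_const, Finset.card_range,
        nsmul_eq_mul]
      rw [← pow_add, show i + (e - 1 - i) = e - 1 by
        have := Finset.mem_range.mp hi; omega, hz]
    -- map the defining identity to ℂ[X]
    have hPC : (P.map (algebraMap ℤ ℂ)) * ∏ j : Fin n, ((X : Polynomial ℂ) ^ (v j) - 1) =
        X ^ (∑ j : Fin n, v j) * ∏ j : Fin n, ((X : Polynomial ℂ) ^ (d - v j) - 1) := by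
      have h := congrArg (Polynomial.map (algebraMap ℤ ℂ)) hP
      simpa only [Polynomial.map_mul, Polynomial.map_prod, Polynomial.map_pow,
        Polynomial.map_sub, Polynomial.map_one, Polynomial.map_X] using h
    have h1 : ∏ j ∈ M, ((X : Polynomial ℂ) ^ (v j) - 1) =
        (∏ j ∈ M, g (v j)) * (X - C ζ) ^ m := by
      rw [Finset.prod_congr rfl (fun j hj => hfac (v j) (hMv j hj)),
        Finset.prod_mul_distrib, Finset.prod_const, hmdef]
    have h2 : ∏ j ∈ M, ((X : Polynomial ℂ) ^ (d - v j) - 1) =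
        (∏ j ∈ M, g (d - v j)) * (X - C ζ) ^ m := by
      rw [Finset.prod_congr rfl (fun j hj => hfac (d - v j) (hMdv j hj)),
        Finset.prod_mul_distrib, Finset.prod_const, hmdef]
    have hsplit1 : ∏ j : Fin n, ((X : Polynomial ℂ) ^ (v j) - 1) =
        (∏ j ∈ M, ((X : Polynomial ℂ) ^ (v j) - 1)) *
          ∏ j ∈ N, ((X : Polynomial ℂ) ^ (v j) - 1) :=
      (Finset.prod_filter_mul_prod_filter_not Finset.univ _ _).symm
    have hsplit2 : ∏ j : Fin n, ((X : Polynomial ℂ) ^ (d - v j) - 1) =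
        (∏ j ∈ M, ((X : Polynomial ℂ) ^ (d - v j) - 1)) *
          ∏ j ∈ N, ((X : Polynomial ℂ) ^ (d - v j) - 1) :=
      (Finset.prod_filter_mul_prod_filter_not Finset.univ _ _).symm
    have hXC : ((X : Polynomial ℂ) - C ζ) ^ m ≠ 0 := pow_ne_zero _ (X_sub_C_ne_zero ζ)
    have hcancel : (P.map (algebraMap ℤ ℂ)) *
        ((∏ j ∈ M, g (v j)) * ∏ j ∈ N, ((X : Polynomial ℂ) ^ (v j) - 1)) =
        X ^ (∑ j : Fin n, v j) *
        ((∏ j ∈ M, g (d - v j)) * ∏ j ∈ N, ((X : Polynomial ℂ) ^ (d - v j) - 1)) := by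
      apply mul_right_cancel₀ hXC
      calc (P.map (algebraMap ℤ ℂ)) *
            ((∏ j ∈ M, g (v j)) * ∏ j ∈ N, ((X : Polynomial ℂ) ^ (v j) - 1)) *
            (X - C ζ) ^ m
          = (P.map (algebraMap ℤ ℂ)) * ∏ j : Fin n, ((X : Polynomial ℂ) ^ (v j) - 1) := by
            rw [hsplit1, h1]; ring
        _ = X ^ (∑ j : Fin n, v j) * ∏ j : Fin n, ((X : Polynomial ℂ) ^ (d - v j) - 1) := hPC
        _ = X ^ (∑ j : Fin n, v j) *
            ((∏ j ∈ M, g (d - v j)) * ∏ j ∈ N, ((X : Polynomial ℂ) ^ (d - v j) - 1)) *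
            (X - C ζ) ^ m := by
            rw [hsplit2, h2]; ring
    -- evaluate at ζ
    have heval := congrArg (Polynomial.eval ζ) hcancel
    simp only [eval_mul, eval_pow, eval_X, eval_one, eval_sub, Polynomial.eval_prod] at heval
    rw [Polynomial.eval_map, ← Polynomial.aeval_def] at heval
    have hgM1 : ∏ j ∈ M, Polynomial.eval ζ (g (v j)) = (∏ j ∈ M, (v j : ℂ)) * (ζ⁻¹) ^ m := by
      rw [Finset.prod_congr rfl (fun j hj => hgeval (v j) (hv j) (hMv j hj)),
        Finset.prod_mul_distrib, Finset.prod_const, hmdef]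
    have hgM2 : ∏ j ∈ M, Polynomial.eval ζ (g (d - v j)) =
        (∏ j ∈ M, ((d : ℂ) - (v j : ℂ))) * (ζ⁻¹) ^ m := by
      rw [Finset.prod_congr rfl (fun j hj =>
          hgeval (d - v j) (by have := hvd j; omega) (hMdv j hj)),
        Finset.prod_mul_distrib, Finset.prod_const, hmdef]
      congr 1
      exact Finset.prod_congr rfl (fun j hj => by rw [Nat.cast_sub (hvd j).le])
    have hptw : ∀ j ∈ N, ζ ^ (d - v j) - 1 = ((-1) * ζ ^ (d - v j)) * (ζ ^ (v j) - 1) := by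
      intro j hj
      have hone : ζ ^ (d - v j) * ζ ^ (v j) = 1 := by
        rw [← pow_add, Nat.sub_add_cancel (hvd j).le, hζd]
      linear_combination hone
    have hN2 : ∏ j ∈ N, (ζ ^ (d - v j) - 1) =
        (-1 : ℂ) ^ (n - m) * (∏ j ∈ N, ζ ^ (d - v j)) * ∏ j ∈ N, (ζ ^ (v j) - 1) := by
      rw [Finset.prod_congr rfl hptw, Finset.prod_mul_distrib, Finset.prod_mul_distrib,
        Finset.prod_const, hcardN]
    rw [hgM1, hgM2, hN2] at heval
    have hzw : ζ ^ (∑ j : Fin n, v j) * ∏ j ∈ N, ζ ^ (d - v j) = 1 := by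
      rw [← Finset.prod_pow_eq_pow_sum]
      rw [show ∏ j : Fin n, ζ ^ (v j) =
        (∏ j ∈ M, ζ ^ (v j)) * ∏ j ∈ N, ζ ^ (v j) from
        (Finset.prod_filter_mul_prod_filter_not Finset.univ _ _).symm]
      rw [Finset.prod_eq_one hMv, one_mul, ← Finset.prod_mul_distrib]
      apply Finset.prod_eq_one
      intro j hj
      rw [← pow_add, Nat.add_sub_cancel' (hvd j).le, hζd]
    -- final algebra
    set A := ∏ j ∈ M, ((d : ℂ) - (v j : ℂ)) with hAdef
    set Bv := ∏ j ∈ M, (v j : ℂ) with hBdef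
    set Q := ∏ j ∈ N, (ζ ^ (v j) - 1) with hQdef
    set W := ∏ j ∈ N, ζ ^ (d - v j) with hWdef
    have hBne : Bv ≠ 0 := by
      rw [hBdef]
      exact Finset.prod_ne_zero_iff.mpr (fun j _ => Nat.cast_ne_zero.mpr (hv j).ne')
    have hQne : Q ≠ 0 := Finset.prod_ne_zero_iff.mpr hNv
    have hprodMdiv : ∏ j ∈ M, (((d : ℂ) - (v j : ℂ)) / (v j : ℂ)) = A / Bv := by
      rw [hAdef, hBdef, Finset.prod_div_distrib]
    rw [hprodMdiv]
    have hne : Bv * (ζ⁻¹) ^ m * Q ≠ 0 :=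
      mul_ne_zero (mul_ne_zero hBne (pow_ne_zero _ (inv_ne_zero hζ0))) hQne
    apply mul_right_cancel₀ hne
    calc (Polynomial.aeval ζ) P * (Bv * (ζ⁻¹) ^ m * Q)
        = (Polynomial.aeval ζ) P * (Bv * (ζ⁻¹) ^ m * Q) := rfl
      _ = ζ ^ (∑ j : Fin n, v j) * (A * (ζ⁻¹) ^ m * ((-1 : ℂ) ^ (n - m) * W * Q)) := heval
      _ = (ζ ^ (∑ j : Fin n, v j) * W) * (A * (ζ⁻¹) ^ m * ((-1 : ℂ) ^ (n - m) * Q)) := by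
          ring
      _ = A * (ζ⁻¹) ^ m * ((-1 : ℂ) ^ (n - m) * Q) := by rw [hzw, one_mul]
      _ = (-1 : ℂ) ^ (n - m) * (A / Bv) * (Bv * (ζ⁻¹) ^ m * Q) := by
          field_simp
  refine ⟨key, ?_⟩
  intro k hk
  set M : Finset (Fin n) := Finset.univ.filter (fun j : Fin n => t j ∣ k) with hMdef
  set m := M.card with hmdef
  set q : ℚ := ∏ j ∈ M, (((d : ℚ) - (v j : ℚ)) / (v j : ℚ)) with hqdef
  have hqpos : 0 < q := by
    rw [hqdef]
    apply Finset.prod_pos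
    intro j _
    apply div_pos
    · have h1 : (v j : ℚ) < (d : ℚ) := by exact_mod_cast hvd j
      linarith
    · exact_mod_cast hv j
  have hcast : ((q : ℂ)) = ∏ j ∈ M, (((d : ℂ) - (v j : ℂ)) / (v j : ℂ)) := by
    rw [hqdef]
    push_cast
    rfl
  set ζ : ℂ := Complex.exp (2 * Real.pi * Complex.I * k / d) with hζdef
  have hkey := key k
  rw [← hζdef, ← hMdef, ← hmdef, ← hcast] at hkey
  have hζd : ζ ^ d = 1 := by
    rw [hζdef, ← Complex.exp_nat_mul]
    rw [show (d : ℂ) * (2 * Real.pi * Complex.I * k / d) = k * (2 * Real.pi * Complex.I) by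
      field_simp]
    rw [Complex.exp_eq_one_iff]
    exact ⟨k, rfl⟩
  have hint1 : IsIntegral ℤ ζ := by
    refine ⟨X ^ d - C 1, Polynomial.monic_X_pow_sub_C 1 hd.ne', ?_⟩
    simp [hζd]
  have hint2 : IsIntegral ℤ ((Polynomial.aeval ζ) P) :=
    IsIntegral.of_mem_of_fg _ hint1.fg_adjoin_singleton _
      (Polynomial.aeval_mem_adjoin_singleton ℤ ζ)
  have hsign : ((-1 : ℂ) ^ (n - m)) * ((-1 : ℂ) ^ (n - m)) = 1 := by
    rw [← pow_add]
    exact Even.neg_one_pow ⟨n - m, rfl⟩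
  have hq2 : ((q : ℂ)) = (-1 : ℂ) ^ (n - m) * (Polynomial.aeval ζ) P := by
    rw [hkey, ← mul_assoc, hsign, one_mul]
  have hint3 : IsIntegral ℤ ((q : ℂ)) := by
    rw [hq2]
    exact (((isIntegral_one).neg).pow _).mul hint2
  have hint4 : IsIntegral ℤ q := by
    rw [show ((q : ℂ)) = algebraMap ℚ ℂ q from (eq_ratCast (algebraMap ℚ ℂ) q).symm] at hint3
    exact (isIntegral_algebraMap_iff (algebraMap ℚ ℂ).injective).mp hint3
  obtain ⟨z, hz⟩ := IsIntegrallyClosed.isIntegral_iff.mp hint4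
  have hz' : (z : ℚ) = q := by rw [← hz]; simp
  have hzpos : 0 < z := by
    have : (0 : ℚ) < (z : ℚ) := by rw [hz']; exact hqpos
    exact_mod_cast this
  refine ⟨z.toNat, by omega, ?_⟩
  rw [← hz']
  exact_mod_cast (congrArg (Int.cast : ℤ → ℚ) (Int.toNat_of_nonneg hzpos.le)).symm


end WeightPaper
end
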